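/- Let m ≥ 1, π: F₂^m → F₂^m a bijection with coordinate functions π₁,…,π_m, and h an m-variable Boolean function. Then the Maiorana-McFarland function MM_{2m}(X,Y) = ⟨π(X),Y⟩ ⊕ h(X) is bent, i.e. all its Walsh transform values equal ±2^m. -/
import Mathlib


abbrev BF (n : ℕ) := (Fin n → ZMod 2) → ZMod 2

/-- Hamming weight of a vector in `F₂ⁿ`. -/
def wtv {n : ℕ} (x : Fin n → ZMod 2) : ℕ :=
  (Finset.univ.filter fun i => x i = 1).card

/-- ANF coefficient `a_α = ⊕_{z ≤ α} f(z)`. -/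
def anf {n : ℕ} (f : BF n) (α : Fin n → ZMod 2) : ZMod 2 :=
  ∑ z ∈ Finset.univ.filter (fun z : Fin n → ZMod 2 => ∀ i, z i = 1 → α i = 1), f z

/-- Algebraic degree: the maximum weight of `α` with nonzero ANF coefficient
(0 for the zero function). -/
def degBF {n : ℕ} (f : BF n) : ℕ :=
  (Finset.univ.filter fun α => anf f α ≠ 0).sup wtv

/-- Algebraic immunity: minimum degree of a nonzero annihilator of `f` or of `1 ⊕ f`. -/
noncomputable def AI {n : ℕ} (f : BF n) : ℕ :=
  sInf {d : ℕ | ∃ g : BF n, g ≠ 0 ∧ degBF g = d ∧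
    ((∀ x, g x * f x = 0) ∨ (∀ x, g x * (1 + f x) = 0))}

/-- Inner product over F₂. -/
def ip {m : ℕ} (x y : Fin m → ZMod 2) : ZMod 2 := ∑ i, x i * y i

/-- The Maiorana-McFarland function ⟨π(X),Y⟩ ⊕ h(X) is bent: all Walsh transform
values equal ±2^m. -/
def χ (u : ZMod 2) : ℤ := (-1) ^ u.val
lemma χ_add (u v : ZMod 2) : χ (u + v) = χ u * χ v := by revert u v; decide
lemma ip_add_right {m : ℕ} (c y y' : Fin m → ZMod 2) :
    ip c (y + y') = ip c y + ip c y' := by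
  simp [ip, mul_add, Finset.sum_add_distrib]
lemma ip_single {m : ℕ} (c : Fin m → ZMod 2) (i : Fin m) :
    ip c (Pi.single i 1) = c i := by
  rw [ip, Finset.sum_eq_single i]
  · simp
  · intro j _ hj; simp [Pi.single_apply, hj]
  · simp

lemma sum_χ_ip {m : ℕ} (c : Fin m → ZMod 2) :
    ∑ y : Fin m → ZMod 2, χ (ip c y) = if c = 0 then 2 ^ m else 0 := by
  split_ifs with hc
  · subst hc
    have h0 : ∀ y : Fin m → ZMod 2, ip 0 y = 0 := by intro y; simp [ip]
    simp only [h0]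
    simp [χ, Finset.card_univ]
  · obtain ⟨i, hi⟩ := Function.ne_iff.mp hc
    have hci : c i = 1 := by
      have : ∀ u : ZMod 2, u ≠ 0 → u = 1 := by decide
      exact this _ hi
    set e : Fin m → ZMod 2 := Pi.single i 1 with he
    have key : ∑ y : Fin m → ZMod 2, χ (ip c (e + y))
        = ∑ y : Fin m → ZMod 2, χ (ip c y) :=
      Fintype.sum_equiv (Equiv.addLeft e) _ _ (fun y => by simp)
    have neg : ∀ y : Fin m → ZMod 2, χ (ip c (e + y)) = - χ (ip c y) := by
      intro y
      rw [ip_add_right, χ_add, he, ip_single, hci]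
      norm_num [χ, ZMod.val_one]
    rw [Finset.sum_congr rfl (fun y _ => neg y)] at key
    simp only [Finset.sum_neg_distrib] at key
    linarith

lemma ip_add_left {m : ℕ} (x x' y : Fin m → ZMod 2) :
    ip (x + x') y = ip x y + ip x' y := by
  simp [ip, add_mul, Finset.sum_add_distrib]

lemma χ_abs (u : ZMod 2) : |χ u| = 1 := by revert u; decide

theorem MM_bent (m : ℕ) (hm : 1 ≤ m)
    (π : (Fin m → ZMod 2) → (Fin m → ZMod 2)) (hπ : Function.Bijective π)
    (h : BF m) (a b : Fin m → ZMod 2) :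
    |∑ x : Fin m → ZMod 2, ∑ y : Fin m → ZMod 2,
        ((-1 : ℤ) ^ ((ip (π x) y + h x + (ip a x + ip b y)).val))| = 2 ^ m := by
  have step : ∀ x : Fin m → ZMod 2,
      (∑ y : Fin m → ZMod 2, ((-1 : ℤ) ^ ((ip (π x) y + h x + (ip a x + ip b y)).val)))
      = χ (h x + ip a x) * (if π x + b = 0 then (2:ℤ) ^ m else 0) := by
    intro x
    rw [← sum_χ_ip (π x + b), Finset.mul_sum]
    refine Finset.sum_congr rfl fun y _ => ?_
    show χ (ip (π x) y + h x + (ip a x + ip b y)) = _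
    rw [ip_add_left]
    have : ip (π x) y + h x + (ip a x + ip b y) = (h x + ip a x) + (ip (π x) y + ip b y) := by
      ring
    rw [this, χ_add]
  simp only [step]
  obtain ⟨x₀, hx₀⟩ := hπ.surjective b
  have hbb : b + b = 0 := by
    funext i
    have : ∀ u : ZMod 2, u + u = 0 := by decide
    exact this _
  rw [Finset.sum_eq_single x₀]
  · have : π x₀ + b = 0 := by rw [hx₀]; exact hbb
    rw [if_pos this, abs_mul, χ_abs, one_mul, abs_pow]
    norm_num
  · intro x _ hx
    have : π x + b ≠ 0 := by
      intro hcontra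
      apply hx
      apply hπ.injective
      rw [hx₀]
      have : π x + (b + b) = 0 + b := by rw [← add_assoc, hcontra]
      simpa [hbb] using this
    rw [if_neg this, mul_zero]
  · intro hmem; exact absurd (Finset.mem_univ x₀) hmem
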